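/- Let T be a finite normal rooted tree in a connected graph G and let W be a finite set of vertices of G. Then T can be extended to a finite normal rooted tree T' ⊇ T in G (with the same root) such that W ⊆ V(T'). -/

import Mathlib

open Set

namespace NST

variable {V : Type*}

/-- A ray (one-way infinite path) in `G`, given by its vertex sequence. -/
def IsRay (G : SimpleGraph V) (f : ℕ → V) : Prop :=
  Function.Injective f ∧ ∀ n, G.Adj (f n) (f (n + 1))

/-- `S` separates `A` from `B` in `G`: every walk from `A` to `B` meets `S`. -/
def Separates (G : SimpleGraph V) (S A B : Set V) : Prop :=
  ∀ a ∈ A, ∀ b ∈ B, ∀ p : G.Walk a b, ∃ s ∈ S, s ∈ p.support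

/-- `U` is dispersed in `G`: every ray can be separated from `U` by a finite
vertex set (separating `U` from a tail of the ray). -/
def Dispersed (G : SimpleGraph V) (U : Set V) : Prop :=
  ∀ f : ℕ → V, IsRay G f →
    ∃ S : Set V, S.Finite ∧ ∃ N : ℕ, Separates G S U (f '' {n | N ≤ n})

/-- A subdivision of the countably infinite complete graph `K^{ℵ₀}` inside `G`:
countably many branch vertices, pairwise joined by internally disjoint paths. -/
structure KSubdivision (G : SimpleGraph V) where
  branch : ℕ → V
  inj : Function.Injective branch
  path : ∀ i j : ℕ, i < j → G.Walk (branch i) (branch j)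
  isPath : ∀ i j (h : i < j), (path i j h).IsPath
  internallyDisjoint : ∀ i j (h : i < j), ∀ i' j' (h' : i' < j'), (i, j) ≠ (i', j') →
    ∀ v, v ∈ (path i j h).support → v ∈ (path i' j' h').support →
      (v = branch i ∨ v = branch j) ∧ (v = branch i' ∨ v = branch j')

/-- The vertex set of a subdivided `K^{ℵ₀}`. -/
def KSubdivision.verts {G : SimpleGraph V} (K : KSubdivision G) : Set V :=
  ⋃ (i : ℕ) (j : ℕ) (h : i < j), {v | v ∈ (K.path i j h).support}

/-- `U` is `TK^{ℵ₀}`-dispersed in `G`: every subdivided infinite clique in `G`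
can be separated from `U` by a finite vertex set. -/
def TKDispersed (G : SimpleGraph V) (U : Set V) : Prop :=
  ∀ K : KSubdivision G, ∃ S : Set V, S.Finite ∧ Separates G S U K.verts

/-- Tree-order of a (spanning) tree `T` on `V` with root `r`:
`u ≤ v` iff `u` lies on every (equivalently, the unique) `r`–`v` path in `T`. -/
def TreeLE (T : SimpleGraph V) (r u v : V) : Prop :=
  ∀ p : T.Walk r v, p.IsPath → u ∈ p.support

/-- `T` is a normal spanning tree of `G` with root `r`. -/
def IsNormalSpanningTree (G T : SimpleGraph V) (r : V) : Prop :=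
  T ≤ G ∧ T.IsTree ∧ ∀ u v : V, G.Adj u v → TreeLE T r u v ∨ TreeLE T r v u

/-- `G` has a normal spanning tree. -/
def HasNST (G : SimpleGraph V) : Prop :=
  ∃ (T : SimpleGraph V) (r : V), IsNormalSpanningTree G T r

/-- Tree-order for a rooted tree given as a subgraph `T ⊆ G`. -/
def SubTreeLE (G : SimpleGraph V) (T : G.Subgraph) (r u v : V) : Prop :=
  ∃ (hr : r ∈ T.verts) (hu : u ∈ T.verts) (hv : v ∈ T.verts),
    ∀ p : T.coe.Walk ⟨r, hr⟩ ⟨v, hv⟩, p.IsPath → ⟨u, hu⟩ ∈ p.support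

/-- `p` is a `T`-path in `G`: a nontrivial path with both ends in `T` but all
edges and inner vertices outside `T`. -/
def IsTPath (G : SimpleGraph V) (T : G.Subgraph) {u v : V} (p : G.Walk u v) : Prop :=
  p.IsPath ∧ 0 < p.length ∧ u ∈ T.verts ∧ v ∈ T.verts ∧
    (∀ w ∈ p.support, w ≠ u → w ≠ v → w ∉ T.verts) ∧
    ∀ e ∈ p.edges, e ∉ T.edgeSet

/-- `T` is a normal rooted tree in `G` with root `r`: it is a tree containing `r`,
and the endvertices of every `T`-path in `G` are comparable in its tree-order. -/
def IsNormalTree (G : SimpleGraph V) (T : G.Subgraph) (r : V) : Prop :=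
  T.coe.IsTree ∧ r ∈ T.verts ∧
    ∀ (u v : V) (p : G.Walk u v), IsTPath G T p →
      SubTreeLE G T r u v ∨ SubTreeLE G T r v u

/-- `D` is (the vertex set of) a connected component of the subgraph of `G`
induced on `A`: a maximal subset of `A` inducing a connected subgraph. -/
def IsComponentOf (G : SimpleGraph V) (A D : Set V) : Prop :=
  D ⊆ A ∧ D.Nonempty ∧ (G.induce D).Connected ∧
    ∀ D' : Set V, D ⊆ D' → D' ⊆ A → (G.induce D').Connected → D' = D

/-- The neighbourhood `N(D)` of a set `D` in (the vertex set of) `T`. -/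
def NbhdIn (G : SimpleGraph V) (T : G.Subgraph) (D : Set V) : Set V :=
  {x ∈ T.verts | ∃ d ∈ D, G.Adj x d}

/-- The subgraph `T` of `G` is rayless: it contains no one-way infinite path. -/
def Rayless {W : Type*} {G : SimpleGraph W} (T : G.Subgraph) : Prop :=
  ¬ ∃ f : ℕ → W, Function.Injective f ∧ ∀ n, T.Adj (f n) (f (n + 1))

/-- `x` dominates the ray `f` in `G`: no finite vertex set avoiding `x`
separates `x` from (a tail of) the ray. -/
def Dominates (G : SimpleGraph V) (f : ℕ → V) (x : V) : Prop :=
  ∀ S : Set V, S.Finite → x ∉ S →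
    ∃ (n : ℕ) (p : G.Walk x (f n)), ∀ s ∈ S, s ∉ p.support

end NST

open NST

namespace NSTA

open SimpleGraph Set NST

set_option linter.unusedSectionVars false
set_option linter.unusedVariables false
set_option maxHeartbeats 1000000



variable {V : Type*} {G : SimpleGraph V}

/-- Transfer a walk in a larger subgraph down to a smaller one, given that all its
vertices lie in the smaller one and edges between such vertices descend. -/
def down {T T₁ : G.Subgraph}
    (hadj : ∀ ⦃x y : V⦄, T₁.Adj x y → x ∈ T.verts → y ∈ T.verts → T.Adj x y) :
    ∀ {a b : T₁.verts} (p : T₁.coe.Walk a b)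
      (hsup : ∀ x ∈ p.support, (x : V) ∈ T.verts),
      T.coe.Walk ⟨a.1, hsup a p.start_mem_support⟩ ⟨b.1, hsup b p.end_mem_support⟩
  | _, _, .nil, _ => .nil
  | _, _, .cons h p, hsup =>
      .cons (by exact hadj h (hsup _ (by simp)) (hsup _ (by simp [p.start_mem_support])))
        (down hadj p (fun x hx => hsup x (by simp [hx])))

@[simp] lemma down_support {T T₁ : G.Subgraph}
    (hadj : ∀ ⦃x y : V⦄, T₁.Adj x y → x ∈ T.verts → y ∈ T.verts → T.Adj x y)
    {a b : T₁.verts} (p : T₁.coe.Walk a b) (hsup) :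
    (down hadj p hsup).support.map Subtype.val = p.support.map Subtype.val := by
  induction p with
  | nil => simp [down]
  | cons h p ih => simp only [down]; erw [Walk.support_cons, List.map_cons, ih]; rfl

lemma down_isPath {T T₁ : G.Subgraph}
    (hadj : ∀ ⦃x y : V⦄, T₁.Adj x y → x ∈ T.verts → y ∈ T.verts → T.Adj x y)
    {a b : T₁.verts} {p : T₁.coe.Walk a b} (hp : p.IsPath) (hsup) :
    (down hadj p hsup).IsPath := by
  rw [Walk.isPath_def]
  have h1 : ((down hadj p hsup).support.map Subtype.val).Nodup := by
    rw [down_support]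
    exact (Walk.isPath_def _ |>.1 hp).map Subtype.val_injective
  exact h1.of_map _

lemma down_map {T T₁ : G.Subgraph} (hle : T ≤ T₁)
    (hadj : ∀ ⦃x y : V⦄, T₁.Adj x y → x ∈ T.verts → y ∈ T.verts → T.Adj x y)
    {a b : T₁.verts} (p : T₁.coe.Walk a b) (hsup) :
    (down hadj p hsup).map (Subgraph.inclusion hle) = p := by
  induction p with
  | nil => rfl
  | cons h p ih => simp only [down]; erw [Walk.map_cons, ih]; rfl



variable {V : Type*} {G : SimpleGraph V}

variable {T : G.Subgraph}

/-- The unique path between two vertices of a tree. -/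
noncomputable def tpath (ht : T.coe.IsTree) (a b : T.verts) : T.coe.Walk a b :=
  (ht.existsUnique_path a b).choose

lemma tpath_isPath (ht : T.coe.IsTree) (a b : T.verts) : (tpath ht a b).IsPath :=
  (ht.existsUnique_path a b).choose_spec.1

lemma tpath_unique (ht : T.coe.IsTree) {a b : T.verts} {p : T.coe.Walk a b}
    (hp : p.IsPath) : p = tpath ht a b :=
  (ht.existsUnique_path a b).choose_spec.2 p hp

lemma subTreeLE_iff (ht : T.coe.IsTree) {r u v : V} (hr : r ∈ T.verts) (hv : v ∈ T.verts) :
    SubTreeLE G T r u v ↔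
      ∃ hu : u ∈ T.verts, (⟨u, hu⟩ : T.verts) ∈ (tpath ht ⟨r, hr⟩ ⟨v, hv⟩).support := by
  constructor
  · rintro ⟨hr', hu, hv', h⟩
    exact ⟨hu, h _ (tpath_isPath ht _ _)⟩
  · rintro ⟨hu, h⟩
    exact ⟨hr, hu, hv, fun p hp => by rw [tpath_unique ht hp]; exact h⟩

lemma subTreeLE_refl (ht : T.coe.IsTree) {r u : V} (hr : r ∈ T.verts) (hu : u ∈ T.verts) :
    SubTreeLE G T r u u :=
  (subTreeLE_iff ht hr hu).2 ⟨hu, Walk.end_mem_support _⟩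

lemma subTreeLE_mem_left {r u v : V} (h : SubTreeLE G T r u v) : u ∈ T.verts := h.2.1

lemma subTreeLE_mem_right {r u v : V} (h : SubTreeLE G T r u v) : v ∈ T.verts := h.2.2.1

lemma subTreeLE_trans (ht : T.coe.IsTree) {r u v w : V}
    (h1 : SubTreeLE G T r u v) (h2 : SubTreeLE G T r v w) : SubTreeLE G T r u w := by
  classical
  obtain ⟨hr, hu, hv, H1⟩ := h1
  obtain ⟨hr2, hv2, hw, H2⟩ := h2
  rw [subTreeLE_iff ht hr hw]
  refine ⟨hu, ?_⟩
  set p := tpath ht ⟨r, hr⟩ ⟨w, hw⟩ with hp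
  have hvp : (⟨v, hv⟩ : T.verts) ∈ p.support := H2 p (tpath_isPath ht _ _)
  have hq : (p.takeUntil _ hvp).IsPath := (tpath_isPath ht _ _).takeUntil hvp
  have := H1 _ hq
  exact Walk.support_takeUntil_subset _ hvp this

/-- Adjacent vertices of a tree are comparable in the tree-order. -/
lemma subTreeLE_of_adj (ht : T.coe.IsTree) {r u v : V} (hr : r ∈ T.verts)
    (h : T.Adj u v) : SubTreeLE G T r u v ∨ SubTreeLE G T r v u := by
  classical
  have hu : u ∈ T.verts := h.fst_mem
  have hv : v ∈ T.verts := h.snd_mem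
  by_cases hmem : (⟨u, hu⟩ : T.verts) ∈ (tpath ht ⟨r, hr⟩ ⟨v, hv⟩).support
  · exact Or.inl ((subTreeLE_iff ht hr hv).2 ⟨hu, hmem⟩)
  · right
    rw [subTreeLE_iff ht hr hu]
    refine ⟨hv, ?_⟩
    set p := tpath ht ⟨r, hr⟩ ⟨v, hv⟩ with hpdef
    have hadj : T.coe.Adj ⟨v, hv⟩ ⟨u, hu⟩ := h.symm
    have hpath : (p.concat hadj).IsPath := by
      rw [← Walk.isPath_reverse_iff, Walk.reverse_concat]
      refine Walk.IsPath.cons ?_ ?_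
      · rw [Walk.isPath_reverse_iff]; exact tpath_isPath ht _ _
      · simpa [Walk.support_reverse] using hmem
  -- p.concat hadj is the unique path r → u, and v is on it
    have := tpath_unique ht hpath
    rw [← this]
    simp [Walk.support_concat]



variable {V : Type*} (le : V → V → Prop)

/-- A finite nonempty chain (w.r.t. a transitive relation) has a greatest element. -/
lemma chain_max (htrans : ∀ {a b c}, le a b → le b c → le a c)
    {S : Set V} (hfin : S.Finite) (hne : S.Nonempty)
    (hrefl : ∀ x ∈ S, le x x)
    (hchain : ∀ x ∈ S, ∀ y ∈ S, le x y ∨ le y x) :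
    ∃ m ∈ S, ∀ x ∈ S, le x m := by
  induction S, hfin using Set.Finite.induction_on with
  | empty => exact absurd hne (by simp)
  | @insert a s ha hs ih =>
    by_cases hsne : s.Nonempty
    · obtain ⟨m, hm, hmax⟩ := ih hsne
        (fun x hx => hrefl x (Set.mem_insert_of_mem _ hx))
        (fun x hx y hy => hchain x (Set.mem_insert_of_mem _ hx) y (Set.mem_insert_of_mem _ hy))
      rcases hchain a (Set.mem_insert _ _) m (Set.mem_insert_of_mem _ hm) with h | h
      · refine ⟨m, Set.mem_insert_of_mem _ hm, ?_⟩
        rintro x (rfl | hx)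
        · exact h
        · exact hmax x hx
      · refine ⟨a, Set.mem_insert _ _, ?_⟩
        rintro x (rfl | hx)
        · exact hrefl x (Set.mem_insert _ _)
        · exact htrans (hmax x hx) h
    · rw [Set.not_nonempty_iff_eq_empty] at hsne
      subst hsne
      exact ⟨a, by simp, by simpa using hrefl a (by simp)⟩



variable {V : Type*} {G : SimpleGraph V}

section Pendant

variable {T : G.Subgraph} {t d : V}
  (hG : G.Adj t d)

/-- The extension of `T` by the pendant edge `t-d`. -/
def pext (T : G.Subgraph) (hG : G.Adj t d) : G.Subgraph := T ⊔ G.subgraphOfAdj hG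

variable (htT : t ∈ T.verts) (hdT : d ∉ T.verts)

lemma pext_le : T ≤ pext T hG := le_sup_left

include htT in
lemma pext_verts : (pext T hG).verts = insert d T.verts := by
  simp only [pext, Subgraph.verts_sup, subgraphOfAdj_verts]
  ext x
  constructor
  · rintro (h | h)
    · exact Set.mem_insert_of_mem _ h
    · rcases h with rfl | rfl
      · exact Set.mem_insert_of_mem _ htT
      · exact Set.mem_insert _ _
  · rintro (rfl | h)
    · exact Or.inr (by simp)
    · exact Or.inl h

lemma pext_adj {x y : V} :
    (pext T hG).Adj x y ↔ T.Adj x y ∨ (x = t ∧ y = d) ∨ (x = d ∧ y = t) := by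
  simp only [pext, Subgraph.sup_adj, subgraphOfAdj_adj, Sym2.eq, Sym2.rel_iff', Prod.mk.injEq,
    Prod.swap_prod_mk]
  tauto

include htT hdT

lemma pext_down_adj : ∀ ⦃x y : V⦄, (pext T hG).Adj x y →
    x ∈ T.verts → y ∈ T.verts → T.Adj x y := by
  intro x y h hx hy
  rcases (pext_adj hG).1 h with h | ⟨rfl, rfl⟩ | ⟨rfl, rfl⟩
  · exact h
  · exact absurd hy hdT
  · exact absurd hx hdT

lemma pext_mem_d : d ∈ (pext T hG).verts := by rw [pext_verts hG htT]; exact Set.mem_insert _ _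

lemma pext_mem_of {x : V} (hx : x ∈ T.verts) : x ∈ (pext T hG).verts :=
  (pext_le hG).1 hx

/-- The only neighbour of `d` in the extension is `t`. -/
lemma pext_nbr_d {y : (pext T hG).verts}
    (h : (pext T hG).coe.Adj ⟨d, pext_mem_d hG htT hdT⟩ y) :
    y = ⟨t, pext_mem_of hG htT hdT htT⟩ := by
  have h' : (pext T hG).Adj d y.1 := h
  rcases (pext_adj hG).1 h' with h'' | ⟨h1, h2⟩ | ⟨-, h2⟩
  · exact absurd h''.fst_mem hdT
  · exact Subtype.ext (h2.trans h1)
  · exact Subtype.ext h2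

end Pendant

section Helpers

variable {W : Type*} {H : SimpleGraph W}

/-- A nontrivial walk contains a neighbour of its first vertex. -/
lemma exists_adj_start {a b : W} (q : H.Walk a b) (hab : a ≠ b) :
    ∃ z, H.Adj a z ∧ z ∈ q.support := by
  cases q with
  | nil => exact absurd rfl hab
  | cons h q' => exact ⟨_, h, by simp [q'.start_mem_support]⟩

/-- A nontrivial walk contains a neighbour of its last vertex. -/
lemma exists_adj_end {a b : W} (q : H.Walk a b) (hab : a ≠ b) :
    ∃ z, H.Adj b z ∧ z ∈ q.support := by
  obtain ⟨z, hz, hmem⟩ := exists_adj_start q.reverse (Ne.symm hab)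
  exact ⟨z, hz, by simpa [Walk.support_reverse] using hmem⟩

end Helpers

section Avoid

variable {T : G.Subgraph} {t d : V} (hG : G.Adj t d)
  (htT : t ∈ T.verts) (hdT : d ∉ T.verts)

include htT hdT

/-- A path in the pendant extension between vertices other than `d` avoids `d`. -/
lemma pext_path_avoids {a b : (pext T hG).verts} {p : (pext T hG).coe.Walk a b}
    (hp : p.IsPath) (ha : a.1 ≠ d) (hb : b.1 ≠ d) :
    ∀ x ∈ p.support, x.1 ≠ d := by
  classical
  by_contra hcon
  push_neg at hcon
  obtain ⟨x, hx, hxd⟩ := hcon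
  have hxD : x = ⟨d, pext_mem_d hG htT hdT⟩ := Subtype.ext hxd
  subst hxD
  set D : (pext T hG).verts := ⟨d, pext_mem_d hG htT hdT⟩ with hD
  set tt : (pext T hG).verts := ⟨t, pext_mem_of hG htT hdT htT⟩ with htt
  have q1 := p.takeUntil D hx
  have hq1 : (p.takeUntil D hx).IsPath := hp.takeUntil hx
  have hq2 : (p.dropUntil D hx).IsPath := hp.dropUntil hx
  have haD : a ≠ D := fun h => ha (congrArg Subtype.val h)
  have hbD : D ≠ b := fun h => hb (congrArg Subtype.val h).symm
  obtain ⟨z1, hz1, hz1mem⟩ := exists_adj_end (p.takeUntil D hx) haD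
  obtain ⟨z2, hz2, hz2mem⟩ := exists_adj_start (p.dropUntil D hx) hbD
  have hz1t : z1 = tt := pext_nbr_d hG htT hdT hz1
  have hz2t : z2 = tt := pext_nbr_d hG htT hdT hz2
  subst hz1t hz2t
  -- t occurs both in the take part and in the tail of the drop part
  have htail : tt ∈ (p.dropUntil D hx).support.tail := by
    have hcons := (p.dropUntil D hx).support_eq_cons
    have hne : tt ≠ D := fun h => hdT (by
      have : t = d := congrArg Subtype.val h
      rwa [this] at htT)
    rw [hcons, List.mem_cons] at hz2mem
    rcases hz2mem with h | h
    · exact absurd h hne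
    · exact h
  have hnodup : p.support.Nodup := hp.support_nodup
  rw [← p.take_spec hx, Walk.support_append] at hnodup
  have hdisj := List.disjoint_of_nodup_append hnodup
  exact hdisj hz1mem htail

end Avoid


section Tree

variable {T : G.Subgraph} {t d : V} (hG : G.Adj t d)
  (htT : t ∈ T.verts) (hdT : d ∉ T.verts) (ht : T.coe.IsTree)

include htT hdT ht

lemma pext_adj_td : (pext T hG).coe.Adj ⟨t, pext_mem_of hG htT hdT htT⟩ ⟨d, pext_mem_d hG htT hdT⟩ := by
  show (pext T hG).Adj t d
  rw [pext_adj]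
  exact Or.inr (Or.inl ⟨rfl, rfl⟩)

lemma pext_vert_cases {x : V} (hx : x ∈ (pext T hG).verts) : x = d ∨ x ∈ T.verts := by
  rw [pext_verts hG htT] at hx; exact hx

lemma pext_support_in_T {a b : (pext T hG).verts} {p : (pext T hG).coe.Walk a b}
    (hp : p.IsPath) (ha : a.1 ≠ d) (hb : b.1 ≠ d) :
    ∀ x ∈ p.support, (x : V) ∈ T.verts := by
  intro x hx
  rcases pext_vert_cases hG htT hdT ht x.2 with h | h
  · exact absurd h (pext_path_avoids hG htT hdT hp ha hb x hx)
  · exact h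

lemma pext_unique_nd {a b : (pext T hG).verts} (ha : a.1 ≠ d) (hb : b.1 ≠ d)
    {p₁ p₂ : (pext T hG).coe.Walk a b} (h₁ : p₁.IsPath) (h₂ : p₂.IsPath) : p₁ = p₂ := by
  have hsup₁ := pext_support_in_T hG htT hdT ht h₁ ha hb
  have hsup₂ := pext_support_in_T hG htT hdT ht h₂ ha hb
  have hda := pext_down_adj hG htT hdT
  have e₁ := tpath_unique ht (down_isPath hda h₁ hsup₁)
  have e₂ := tpath_unique ht (down_isPath hda h₂ hsup₂)
  have e : down hda p₁ hsup₁ = down hda p₂ hsup₂ := e₁.trans e₂.symm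
  have hm₁ := down_map (pext_le hG) hda p₁ hsup₁
  have hm₂ := down_map (pext_le hG) hda p₂ hsup₂
  rw [e] at hm₁
  exact hm₁.symm.trans hm₂

lemma pext_map_isPath {a b : T.verts} :
    ((tpath ht a b).map (Subgraph.inclusion (pext_le hG))).IsPath :=
  Walk.map_isPath_of_injective (Subgraph.inclusion.injective (pext_le hG)) (tpath_isPath ht a b)

lemma pext_map_support_ne_d {a b : T.verts}
    {x : (pext T hG).verts} (hx : x ∈ ((tpath ht a b).map (Subgraph.inclusion (pext_le hG))).support) :
    x.1 ≠ d := by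
  rw [Walk.support_map, List.mem_map] at hx
  obtain ⟨y, hy, rfl⟩ := hx
  exact fun h => hdT (h ▸ y.2)

/-- The spine: the path from a tree vertex `a` to the new leaf `d`. -/
lemma pext_spine_isPath {a : V} (haT : a ∈ T.verts) :
    ((((tpath ht ⟨a, haT⟩ ⟨t, htT⟩).map (Subgraph.inclusion (pext_le hG))).concat
      (pext_adj_td hG htT hdT ht))).IsPath := by
  rw [← Walk.isPath_reverse_iff]; erw [Walk.reverse_concat]
  refine Walk.IsPath.cons ?_ ?_
  · rw [Walk.isPath_reverse_iff]; exact pext_map_isPath hG htT hdT ht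
  · rw [Walk.support_reverse, List.mem_reverse]
    intro hmem
    exact pext_map_support_ne_d hG htT hdT ht hmem rfl

lemma pext_path_from_d {b a : (pext T hG).verts} (hb : b.1 = d) (ha : a.1 ≠ d)
    (w : (pext T hG).coe.Walk b a) (hw : w.IsPath) :
    ∃ (h : (pext T hG).coe.Adj b ⟨t, pext_mem_of hG htT hdT htT⟩)
      (q : (pext T hG).coe.Walk ⟨t, pext_mem_of hG htT hdT htT⟩ a),
        q.IsPath ∧ w = Walk.cons h q := by
  cases w with
  | nil => exact absurd hb ha
  | @cons _ z _ h q =>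
    have hbD : b = ⟨d, pext_mem_d hG htT hdT⟩ := Subtype.ext hb
    have hz : z = ⟨t, pext_mem_of hG htT hdT htT⟩ := pext_nbr_d hG htT hdT (hbD ▸ h)
    subst hz
    rw [Walk.cons_isPath_iff] at hw
    exact ⟨h, q, hw.1, rfl⟩

lemma pext_unique {a b : (pext T hG).verts}
    {p₁ p₂ : (pext T hG).coe.Walk a b} (h₁ : p₁.IsPath) (h₂ : p₂.IsPath) : p₁ = p₂ := by
  have htd : t ≠ d := fun h => hdT (h ▸ htT)
  by_cases ha : a.1 = d <;> by_cases hb : b.1 = d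
  · have : a = b := Subtype.ext (ha.trans hb.symm)
    subst this
    have e₁ : (⟨p₁, h₁⟩ : (pext T hG).coe.Path a a) = SimpleGraph.Path.nil := Path.loop_eq _
    have e₂ : (⟨p₂, h₂⟩ : (pext T hG).coe.Path a a) = SimpleGraph.Path.nil := Path.loop_eq _
    have := e₁.trans e₂.symm
    exact congrArg Subtype.val this
  · -- a = d, b ≠ d
    obtain ⟨ad₁, q₁, hq₁, e₁⟩ := pext_path_from_d hG htT hdT ht ha hb p₁ h₁
    obtain ⟨ad₂, q₂, hq₂, e₂⟩ := pext_path_from_d hG htT hdT ht ha hb p₂ h₂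
    have hq : q₁ = q₂ := pext_unique_nd hG htT hdT ht htd hb hq₁ hq₂
    rw [e₁, e₂, hq]
  · -- b = d, a ≠ d
    obtain ⟨ad₁, q₁, hq₁, e₁⟩ := pext_path_from_d hG htT hdT ht hb ha p₁.reverse
      ((Walk.isPath_reverse_iff _).2 h₁)
    obtain ⟨ad₂, q₂, hq₂, e₂⟩ := pext_path_from_d hG htT hdT ht hb ha p₂.reverse
      ((Walk.isPath_reverse_iff _).2 h₂)
    have hq : q₁ = q₂ := pext_unique_nd hG htT hdT ht htd ha hq₁ hq₂
    have hrev : p₁.reverse = p₂.reverse := by rw [e₁, e₂, hq]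
    rw [← Walk.reverse_reverse p₁, hrev, Walk.reverse_reverse]
  · exact pext_unique_nd hG htT hdT ht ha hb h₁ h₂

lemma pext_exists_path (a b : (pext T hG).verts) :
    ∃ p : (pext T hG).coe.Walk a b, p.IsPath := by
  obtain ⟨av, ham⟩ := a
  obtain ⟨bv, hbm⟩ := b
  rcases pext_vert_cases hG htT hdT ht ham with rfl | haT <;>
    rcases pext_vert_cases hG htT hdT ht hbm with h | hbT
  · -- both d
    have heq : (⟨av, ham⟩ : (pext T hG).verts) = ⟨bv, hbm⟩ := Subtype.ext h.symm
    exact heq ▸ ⟨Walk.nil, Walk.IsPath.nil⟩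
  · -- a = d, b in T
    refine ⟨((((tpath ht ⟨bv, hbT⟩ ⟨t, htT⟩).map (Subgraph.inclusion (pext_le hG))).concat
      (pext_adj_td hG htT hdT ht))).reverse, ?_⟩
    erw [Walk.isPath_reverse_iff]
    exact pext_spine_isPath hG htT hdT ht hbT
  · -- a in T, b = d
    subst h
    exact ⟨((tpath ht ⟨av, haT⟩ ⟨t, htT⟩).map (Subgraph.inclusion (pext_le hG))).concat
      (pext_adj_td hG htT hdT ht), pext_spine_isPath hG htT hdT ht haT⟩
  · exact ⟨(tpath ht ⟨av, haT⟩ ⟨bv, hbT⟩).map (Subgraph.inclusion (pext_le hG)),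
      pext_map_isPath hG htT hdT ht⟩

lemma pext_isTree : (pext T hG).coe.IsTree := by
  rw [isTree_iff_existsUnique_path]
  refine ⟨⟨⟨t, pext_mem_of hG htT hdT htT⟩⟩, fun a b => ?_⟩
  obtain ⟨p, hp⟩ := pext_exists_path hG htT hdT ht a b
  exact ⟨p, hp, fun q hq => pext_unique hG htT hdT ht hq hp⟩

end Tree

section Dset

variable {T T' : G.Subgraph} {w v x z : V}

/-- The set of vertices reachable from `w` by walks avoiding `T`. -/
def Dset (G : SimpleGraph V) (T : G.Subgraph) (w : V) : Set V :=
  {v | ∃ p : G.Walk w v, ∀ x ∈ p.support, x ∉ T.verts}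

lemma Dset_self (hw : w ∉ T.verts) : w ∈ Dset G T w :=
  ⟨Walk.nil, by simpa using hw⟩

lemma Dset_not_T (hv : v ∈ Dset G T w) : v ∉ T.verts := by
  obtain ⟨p, hp⟩ := hv
  exact hp v p.end_mem_support

lemma Dset_trans (hv : v ∈ Dset G T w) (hx : x ∈ Dset G T v) : x ∈ Dset G T w := by
  obtain ⟨p, hp⟩ := hv
  obtain ⟨q, hq⟩ := hx
  refine ⟨p.append q, fun y hy => ?_⟩
  rw [Walk.mem_support_append_iff] at hy
  rcases hy with hy | hy
  · exact hp y hy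
  · exact hq y hy

lemma Dset_symm (hv : v ∈ Dset G T w) : w ∈ Dset G T v := by
  obtain ⟨p, hp⟩ := hv
  exact ⟨p.reverse, fun y hy => hp y (by simpa [Walk.support_reverse] using hy)⟩

lemma Dset_eq (hv : v ∈ Dset G T w) : Dset G T v = Dset G T w :=
  Set.ext fun x => ⟨fun h => Dset_trans hv h, fun h => Dset_trans (Dset_symm hv) h⟩

lemma Dset_anti (hle : T ≤ T') (h : x ∈ Dset G T' w) : x ∈ Dset G T w := by
  obtain ⟨p, hp⟩ := h
  exact ⟨p, fun y hy hyT => hp y hy (hle.1 hyT)⟩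

lemma Dset_adj (hv : v ∈ Dset G T w) (hadj : G.Adj v x) (hx : x ∉ T.verts) :
    x ∈ Dset G T w := by
  refine Dset_trans hv ⟨Walk.cons hadj Walk.nil, fun y hy => ?_⟩
  simp only [Walk.support_cons, Walk.support_nil, List.mem_cons, List.mem_singleton] at hy
  rcases hy with rfl | rfl | h
  · exact Dset_not_T hv
  · exact hx
  · exact absurd h List.not_mem_nil

lemma Dset_of_support {p : G.Walk w v} (hp : ∀ y ∈ p.support, y ∉ T.verts) :
    ∀ x ∈ p.support, x ∈ Dset G T w := by
  classical
  intro x hx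
  exact ⟨p.takeUntil x hx, fun y hy => hp y (Walk.support_takeUntil_subset _ _ hy)⟩

/-- First exit: a connected graph with a nonempty tree has an edge from the tree
into the reachability class of `w`. -/
lemma exists_exit_aux :
    ∀ {x y : V} (q : G.Walk x y), y ∈ T.verts → x ∈ Dset G T w →
      ∃ u ∈ T.verts, ∃ z ∈ Dset G T w, G.Adj u z := by
  intro x y q
  induction q with
  | nil => exact fun hy hx => absurd hy (Dset_not_T hx)
  | @cons a b c h' q' ih =>
    intro hy hx
    by_cases hb : b ∈ T.verts
    · exact ⟨b, hb, a, hx, h'.symm⟩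
    · exact ih hy (Dset_adj hx h' hb)

lemma exists_exit (hconn : G.Connected) {r : V} (hr : r ∈ T.verts) (hw : w ∉ T.verts) :
    ∃ u ∈ T.verts, ∃ z ∈ Dset G T w, G.Adj u z := by
  obtain ⟨p⟩ := hconn.preconnected w r
  exact exists_exit_aux p hr (Dset_self hw)

end Dset

section Chain

variable {T : G.Subgraph} {r w : V}

lemma edgeSet_mono {T T' : G.Subgraph} (hle : T ≤ T') : T.edgeSet ⊆ T'.edgeSet := by
  intro e
  refine Sym2.ind (fun a b h => ?_) e
  rw [Subgraph.mem_edgeSet] at h ⊢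
  exact hle.2 h

lemma edges_not_in_T {x y : V} {p : G.Walk x y}
    (hsup : ∀ u ∈ p.support, u ≠ x → u ≠ y → u ∉ T.verts) (hnadj : ¬ T.Adj x y) :
    ∀ e ∈ p.edges, e ∉ T.edgeSet := by
  intro e
  induction e using Sym2.ind with
  | _ a b =>
    intro he hmem
    rw [Subgraph.mem_edgeSet] at hmem
    have haS : a ∈ p.support := Walk.fst_mem_support_of_mem_edges p he
    have hbS : b ∈ p.support := Walk.snd_mem_support_of_mem_edges p he
    have ha' : a = x ∨ a = y := by
      by_contra hc; push_neg at hc; exact (hsup a haS hc.1 hc.2) hmem.fst_mem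
    have hb' : b = x ∨ b = y := by
      by_contra hc; push_neg at hc; exact (hsup b hbS hc.1 hc.2) hmem.snd_mem
    have hne : a ≠ b := hmem.ne
    rcases ha' with rfl | rfl <;> rcases hb' with rfl | rfl
    · exact hne rfl
    · exact hnadj hmem
    · exact hnadj hmem.symm
    · exact hne rfl

/-- Two tree vertices with neighbours in the same component outside the tree are
comparable in the tree-order. -/
lemma nb_chain (hT : IsNormalTree G T r) {x y : V}
    (hx : x ∈ T.verts) (hy : y ∈ T.verts)
    (hzx : ∃ z ∈ Dset G T w, G.Adj x z) (hzy : ∃ z ∈ Dset G T w, G.Adj y z) :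
    SubTreeLE G T r x y ∨ SubTreeLE G T r y x := by
  classical
  obtain ⟨ht, hr, hnorm⟩ := hT
  by_cases hxy : x = y
  · subst hxy; exact Or.inl (subTreeLE_refl ht hr hx)
  by_cases hadjT : T.Adj x y
  · exact subTreeLE_of_adj ht hr hadjT
  obtain ⟨z1, hz1, ha1⟩ := hzx
  obtain ⟨z2, hz2, ha2⟩ := hzy
  obtain ⟨p1, hp1⟩ := hz1
  obtain ⟨p2, hp2⟩ := hz2
  set mid : G.Walk z1 z2 := p1.reverse.append p2 with hmid
  have hmidsup : ∀ u ∈ mid.support, u ∉ T.verts := by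
    intro u hu
    rw [hmid, Walk.mem_support_append_iff] at hu
    rcases hu with hu | hu
    · exact hp1 u (by simpa [Walk.support_reverse] using hu)
    · exact hp2 u hu
  set big : G.Walk x y := Walk.cons ha1 (mid.concat ha2.symm) with hbig
  have hbigsup : ∀ u ∈ big.support, u ≠ x → u ≠ y → u ∉ T.verts := by
    intro u hu hux huy
    rw [hbig, Walk.support_cons, List.mem_cons] at hu
    rcases hu with rfl | hu
    · exact absurd rfl hux
    · rw [Walk.support_concat, List.mem_append] at hu
      rcases hu with hu | hu
      · exact hmidsup u hu
      · exact absurd (List.mem_singleton.1 hu) huy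
  set q := big.toPath with hq
  have hqsub := Walk.support_toPath_subset big
  have hqsup : ∀ u ∈ (q : G.Walk x y).support, u ≠ x → u ≠ y → u ∉ T.verts :=
    fun u hu => hbigsup u (hqsub hu)
  refine hnorm x y q ⟨q.2, ?_, hx, hy, hqsup, ?_⟩
  · exact Nat.pos_of_ne_zero fun h0 => hxy (Walk.eq_of_length_eq_zero h0)
  · exact edges_not_in_T hqsup hadjT

end Chain

section Order

variable {T : G.Subgraph} {t d : V} (hG : G.Adj t d)
  (htT : t ∈ T.verts) (hdT : d ∉ T.verts) (ht : T.coe.IsTree)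

include htT hdT ht

lemma pext_tpath_of_mem {a b : V} (haT : a ∈ T.verts) (hbT : b ∈ T.verts) :
    tpath (pext_isTree hG htT hdT ht) ⟨a, pext_mem_of hG htT hdT haT⟩
        ⟨b, pext_mem_of hG htT hdT hbT⟩
      = (tpath ht ⟨a, haT⟩ ⟨b, hbT⟩).map (Subgraph.inclusion (pext_le hG)) := by
  exact (tpath_unique (pext_isTree hG htT hdT ht) (pext_map_isPath hG htT hdT ht (a := ⟨a, haT⟩) (b := ⟨b, hbT⟩))).symm

lemma pext_subTreeLE_iff {r u v : V} (hr : r ∈ T.verts) (hv : v ∈ T.verts) :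
    SubTreeLE G (pext T hG) r u v ↔ SubTreeLE G T r u v := by
  rw [subTreeLE_iff (pext_isTree hG htT hdT ht) (pext_mem_of hG htT hdT hr)
      (pext_mem_of hG htT hdT hv), subTreeLE_iff ht hr hv,
      pext_tpath_of_mem hG htT hdT ht hr hv]
  constructor
  · rintro ⟨hu, hmem⟩
    erw [Walk.support_map, List.mem_map] at hmem
    obtain ⟨x, hx, hxe⟩ := hmem
    have hval : x.1 = u := congrArg Subtype.val hxe
    refine ⟨hval ▸ x.2, ?_⟩
    rwa [show x = ⟨u, hval ▸ x.2⟩ from Subtype.ext hval] at hx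
  · rintro ⟨hu, hmem⟩
    refine ⟨pext_mem_of hG htT hdT hu, ?_⟩
    erw [Walk.support_map, List.mem_map]
    exact ⟨⟨u, hu⟩, hmem, rfl⟩

lemma pext_tpath_to_d {r : V} (hr : r ∈ T.verts) :
    tpath (pext_isTree hG htT hdT ht) ⟨r, pext_mem_of hG htT hdT hr⟩ ⟨d, pext_mem_d hG htT hdT⟩
      = ((tpath ht ⟨r, hr⟩ ⟨t, htT⟩).map (Subgraph.inclusion (pext_le hG))).concat
          (pext_adj_td hG htT hdT ht) := by
  exact (tpath_unique (pext_isTree hG htT hdT ht) (pext_spine_isPath hG htT hdT ht hr)).symm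

lemma pext_subTreeLE_d_iff {r u : V} (hr : r ∈ T.verts) :
    SubTreeLE G (pext T hG) r u d ↔ (u = d ∨ SubTreeLE G T r u t) := by
  rw [subTreeLE_iff (pext_isTree hG htT hdT ht) (pext_mem_of hG htT hdT hr)
      (pext_mem_d hG htT hdT), subTreeLE_iff ht hr htT, pext_tpath_to_d hG htT hdT ht hr]
  constructor
  · rintro ⟨hu, hmem⟩
    erw [Walk.support_concat, List.mem_append] at hmem
    rcases hmem with hmem | hmem
    · right
      erw [Walk.support_map, List.mem_map] at hmem
      obtain ⟨x, hx, hxe⟩ := hmem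
      have hval : x.1 = u := congrArg Subtype.val hxe
      refine ⟨hval ▸ x.2, ?_⟩
      rwa [show x = ⟨u, hval ▸ x.2⟩ from Subtype.ext hval] at hx
    · left
      simpa using congrArg Subtype.val (List.mem_singleton.1 hmem)
  · rintro (rfl | ⟨hu, hmem⟩)
    · exact ⟨pext_mem_d hG htT hdT, by erw [Walk.support_concat]; simp⟩
    · refine ⟨pext_mem_of hG htT hdT hu, ?_⟩
      erw [Walk.support_concat, List.mem_append]
      left
      erw [Walk.support_map, List.mem_map]
      exact ⟨⟨u, hu⟩, hmem, rfl⟩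

end Order

section PendantNormal

variable {T : G.Subgraph} {r t d : V}

/-- The key lemma: attaching a pendant vertex `d` at `t` preserves normality,
provided `t` is an upper bound for all tree vertices with neighbours in the
component of `d`. -/
lemma pendant_normal (hT : IsNormalTree G T r) (htT : t ∈ T.verts) (hdT : d ∉ T.verts)
    (hG : G.Adj t d)
    (hub : ∀ x ∈ T.verts, ∀ z ∈ Dset G T d, G.Adj x z → SubTreeLE G T r x t) :
    IsNormalTree G (pext T hG) r := by
  obtain ⟨ht, hr, hnorm⟩ := hT
  have ht₁ := pext_isTree hG htT hdT ht
  refine ⟨ht₁, pext_mem_of hG htT hdT hr, ?_⟩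
  -- key step: a T₁-path ending at d forces its other end below d.
  have key : ∀ (u : V) (p : G.Walk u d), u ≠ d → IsTPath G (pext T hG) p →
      SubTreeLE G (pext T hG) r u d := by
    intro u p hud hp
    obtain ⟨hpp, hlen, hu₁, hv₁, hint, hedg⟩ := hp
    have huT : u ∈ T.verts := by
      rcases pext_vert_cases hG htT hdT ht hu₁ with h | h
      · exact absurd h hud
      · exact h
    -- the second vertex of p is in Dset G T d
    cases p with
    | nil => simp at hlen
    | @cons _ z _ hadj q =>
      have hzD : z ∈ Dset G T d := by
        refine Dset_symm ⟨q, fun y hy => ?_⟩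
        have hyne : y ≠ u := by
          rintro rfl
          exact ((Walk.cons_isPath_iff _ _).1 hpp).2 hy
        by_cases hyd : y = d
        · exact hyd ▸ hdT
        · intro hyT
          exact hint y (by simp [hy]) hyne hyd ((pext_le hG).1 hyT)
      have h1 : SubTreeLE G T r u t := hub u huT z hzD hadj
      have h2 : SubTreeLE G (pext T hG) r u t :=
        (pext_subTreeLE_iff hG htT hdT ht hr htT).2 h1
      have h3 : SubTreeLE G (pext T hG) r t d :=
        (pext_subTreeLE_d_iff hG htT hdT ht hr).2 (Or.inr (subTreeLE_refl ht hr htT))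
      exact subTreeLE_trans ht₁ h2 h3
  intro u v p hp
  by_cases hud : u = d <;> by_cases hvd : v = d
  · -- impossible: a nontrivial path from d to d
    exfalso
    subst hud; subst hvd
    have hnil : (⟨p, hp.1⟩ : G.Path _ _) = SimpleGraph.Path.nil := Path.loop_eq _
    have hpn : p = Walk.nil := congrArg Subtype.val hnil
    have hlen := hp.2.1
    rw [hpn] at hlen
    simp at hlen
  · -- u = d
    subst hud
    right
    have hrev : IsTPath G (pext T hG) p.reverse := by
      obtain ⟨h1, h2, h3, h4, h5, h6⟩ := hp
      refine ⟨(Walk.isPath_reverse_iff _).2 h1, by simpa using h2, h4, h3, ?_, ?_⟩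
      · intro y hy
        rw [Walk.support_reverse, List.mem_reverse] at hy
        exact fun hyv hyu => h5 y hy hyu hyv
      · intro e he
        rw [Walk.edges_reverse, List.mem_reverse] at he
        exact h6 e he
    exact key v p.reverse hvd hrev
  · subst hvd
    exact Or.inl (key u p hud hp)
  · -- both in T
    have huT : u ∈ T.verts := by
      rcases pext_vert_cases hG htT hdT ht hp.2.2.1 with h | h
      · exact absurd h hud
      · exact h
    have hvT : v ∈ T.verts := by
      rcases pext_vert_cases hG htT hdT ht hp.2.2.2.1 with h | h
      · exact absurd h hvd
      · exact h
    have hpT : IsTPath G T p := by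
      obtain ⟨h1, h2, h3, h4, h5, h6⟩ := hp
      refine ⟨h1, h2, huT, hvT, ?_, ?_⟩
      · exact fun y hy hyu hyv hyT => h5 y hy hyu hyv ((pext_le hG).1 hyT)
      · exact fun e he heT => h6 e he (edgeSet_mono (pext_le hG) heT)
    rcases hnorm u v p hpT with h | h
    · exact Or.inl ((pext_subTreeLE_iff hG htT hdT ht hr hvT).2 h)
    · exact Or.inr ((pext_subTreeLE_iff hG htT hdT ht hr huT).2 h)

end PendantNormal

section Grow

variable {T₀ : G.Subgraph} {r : V}

lemma grow (hr : r ∈ T₀.verts) :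
    ∀ {c w : V} (q : G.Walk c w) (T' : G.Subgraph),
      T₀ ≤ T' → IsNormalTree G T' r → T'.verts.Finite → c ∈ T'.verts →
      q.IsPath →
      (∀ x ∈ q.support, x ≠ c → x ∉ T'.verts) →
      (∀ x ∈ q.support, x ≠ c → x ∈ Dset G T₀ w) →
      (∀ x ∈ T'.verts, ∀ z, G.Adj x z → z ∈ Dset G T₀ w → z ∉ T'.verts →
        SubTreeLE G T' r x c) →
      ∃ T'' : G.Subgraph, T' ≤ T'' ∧ IsNormalTree G T'' r ∧ T''.verts.Finite ∧ w ∈ T''.verts := by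
  intro c w q
  induction q with
  | nil =>
    intro T' hle hnorm hfin hc _ _ _ _
    exact ⟨T', le_refl _, hnorm, hfin, hc⟩
  | @cons c c₂ w hadj q' ih =>
    intro T' hle hnorm hfin hc hq hsup hD hUB
    have hr' : r ∈ T'.verts := hnorm.2.1
    have ht' := hnorm.1
    have hcnot : c ∉ q'.support := ((Walk.cons_isPath_iff _ _).1 hq).2
    have hc₂c : c₂ ≠ c := fun h => hcnot (h ▸ q'.start_mem_support)
    have hc₂T' : c₂ ∉ T'.verts := hsup c₂ (by simp [q'.start_mem_support]) hc₂c
    have hc₂D : c₂ ∈ Dset G T₀ w := hD c₂ (by simp [q'.start_mem_support]) hc₂c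
    have hub : ∀ x ∈ T'.verts, ∀ z ∈ Dset G T' c₂, G.Adj x z → SubTreeLE G T' r x c := by
      intro x hx z hz hxz
      have hz0 : z ∈ Dset G T₀ w := by
        have hz1 : z ∈ Dset G T₀ c₂ := Dset_anti hle hz
        rwa [Dset_eq hc₂D] at hz1
      exact hUB x hx z hxz hz0 (Dset_not_T hz)
    have hnorm₁ := pendant_normal hnorm hc hc₂T' hadj hub
    have hle₁ : T' ≤ pext T' hadj := pext_le hadj
    obtain ⟨T'', h1, h2, h3, h4⟩ := ih (pext T' hadj) (hle.trans hle₁) hnorm₁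
      (by rw [pext_verts hadj hc]; exact hfin.insert _)
      (pext_mem_d hadj hc hc₂T')
      ((Walk.cons_isPath_iff _ _).1 hq).1
      (fun x hx hxc₂ => by
        rw [pext_verts hadj hc]
        rintro (rfl | hxT)
        · exact hxc₂ rfl
        · exact hsup x (by simp [hx]) (fun h => hcnot (h ▸ hx)) hxT)
      (fun x hx hxc₂ => hD x (by simp [hx]) (fun h => hcnot (h ▸ hx)))
      (fun x hx z hxz hz hznot => by
        rcases pext_vert_cases hadj hc hc₂T' ht' hx with rfl | hxT'
        · exact subTreeLE_refl hnorm₁.1 hnorm₁.2.1 hx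
        · have hz' : z ∉ T'.verts := fun hzT => hznot ((pext_le hadj).1 hzT)
          have h5 : SubTreeLE G T' r x c := hUB x hxT' z hxz hz hz'
          have h6 : SubTreeLE G (pext T' hadj) r x c :=
            (pext_subTreeLE_iff hadj hc hc₂T' ht' hr' hc).2 h5
          have h7 : SubTreeLE G (pext T' hadj) r c c₂ :=
            (pext_subTreeLE_d_iff hadj hc hc₂T' ht' hr').2
              (Or.inr (subTreeLE_refl ht' hr' hc))
          exact subTreeLE_trans hnorm₁.1 h6 h7)
    exact ⟨T'', hle₁.trans h1, h2, h3, h4⟩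

end Grow

section Main

lemma extend_one (hGc : G.Connected) {T : G.Subgraph} {r : V}
    (hT : IsNormalTree G T r) (hfin : T.verts.Finite) (w : V) :
    ∃ T' : G.Subgraph, T ≤ T' ∧ IsNormalTree G T' r ∧ T'.verts.Finite ∧ w ∈ T'.verts := by
  classical
  by_cases hw : w ∈ T.verts
  · exact ⟨T, le_refl _, hT, hfin, hw⟩
  have ht := hT.1
  have hr := hT.2.1
  obtain ⟨u₀, hu₀T, z₀, hz₀, hu₀z⟩ := exists_exit hGc hr hw
  set N : Set V := {x | x ∈ T.verts ∧ ∃ z ∈ Dset G T w, G.Adj x z} with hN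
  have hNfin : N.Finite := hfin.subset fun x hx => hx.1
  have hNne : N.Nonempty := ⟨u₀, hu₀T, z₀, hz₀, hu₀z⟩
  have hchain : ∀ x ∈ N, ∀ y ∈ N, SubTreeLE G T r x y ∨ SubTreeLE G T r y x :=
    fun x hx y hy => nb_chain hT hx.1 hy.1 hx.2 hy.2
  obtain ⟨tstar, htstarN, hmax⟩ := chain_max (SubTreeLE G T r)
    (fun h1 h2 => subTreeLE_trans ht h1 h2) hNfin hNne
    (fun x hx => subTreeLE_refl ht hr hx.1) hchain
  obtain ⟨htstarT, zstar, hzstarD, hadj⟩ := htstarN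
  have hzstarT : zstar ∉ T.verts := Dset_not_T hzstarD
  have hub : ∀ x ∈ T.verts, ∀ z ∈ Dset G T zstar, G.Adj x z → SubTreeLE G T r x tstar := by
    intro x hx z hz hxz
    have hzw : z ∈ Dset G T w := by rwa [Dset_eq hzstarD] at hz
    exact hmax x ⟨hx, z, hzw, hxz⟩
  have hnorm₁ := pendant_normal hT htstarT hzstarT hadj hub
  obtain ⟨p, hp⟩ := hzstarD
  set q0 := p.reverse.toPath with hq0
  have hq0sup : ∀ x ∈ (q0 : G.Walk zstar w).support, x ∉ T.verts := fun x hx =>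
    hp x (by
      have h := Walk.support_toPath_subset p.reverse hx
      rwa [Walk.support_reverse, List.mem_reverse] at h)
  have hq0D : ∀ x ∈ (q0 : G.Walk zstar w).support, x ∈ Dset G T w := by
    intro x hx
    have h := Dset_of_support hq0sup x hx
    rwa [← Dset_eq (Dset_symm ⟨p, hp⟩)] at h
  obtain ⟨T'', h1, h2, h3, h4⟩ := grow hr (q0 : G.Walk zstar w) (pext T hadj)
    (pext_le hadj) hnorm₁
    (by rw [pext_verts hadj htstarT]; exact hfin.insert _)
    (pext_mem_d hadj htstarT hzstarT)
    q0.2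
    (fun x hx hxz => by
      rw [pext_verts hadj htstarT]
      rintro (rfl | hxT)
      · exact hxz rfl
      · exact hq0sup x hx hxT)
    (fun x hx _ => hq0D x hx)
    (fun x hx z hxz hz hznot => by
      rcases pext_vert_cases hadj htstarT hzstarT ht hx with rfl | hxT
      · exact subTreeLE_refl hnorm₁.1 hnorm₁.2.1 hx
      · have h5 : SubTreeLE G T r x tstar := hmax x ⟨hxT, z, hz, hxz⟩
        have h6 := (pext_subTreeLE_iff hadj htstarT hzstarT ht hr htstarT).2 h5
        have h7 := (pext_subTreeLE_d_iff hadj htstarT hzstarT ht hr).2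
          (Or.inr (subTreeLE_refl ht hr htstarT))
        exact subTreeLE_trans hnorm₁.1 h6 h7)
  exact ⟨T'', (pext_le hadj).trans h1, h2, h3, h4⟩

lemma extend_many (hGc : G.Connected) {r : V} {W : Set V} (hW : W.Finite) :
    ∀ (T : G.Subgraph), IsNormalTree G T r → T.verts.Finite →
      ∃ T' : G.Subgraph, T ≤ T' ∧ IsNormalTree G T' r ∧ T'.verts.Finite ∧ W ⊆ T'.verts := by
  induction W, hW using Set.Finite.induction_on with
  | empty => exact fun T hT hfin => ⟨T, le_refl _, hT, hfin, by simp⟩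
  | @insert a s ha hs ih =>
    intro T hT hfin
    obtain ⟨T', h1, h2, h3, h4⟩ := ih T hT hfin
    obtain ⟨T'', g1, g2, g3, g4⟩ := extend_one hGc h2 h3 a
    refine ⟨T'', h1.trans g1, g2, g3, ?_⟩
    intro x hx
    rcases Set.mem_insert_iff.1 hx with rfl | hx
    · exact g4
    · exact g1.1 (h4 hx)

theorem stmt8' (hG : G.Connected) (T : G.Subgraph)
    (r : V) (hT : IsNormalTree G T r) (hfin : T.verts.Finite)
    (W : Set V) (hW : W.Finite) :
    ∃ T' : G.Subgraph, T ≤ T' ∧ IsNormalTree G T' r ∧ T'.verts.Finite ∧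
      W ⊆ T'.verts :=
  extend_many hG hW T hT hfin

end Main

end NSTA
/-- A finite normal rooted tree in a connected graph can be extended to a finite
normal rooted tree with the same root covering any given finite vertex set. -/
theorem stmt8 {V : Type*} (G : SimpleGraph V) (hG : G.Connected) (T : G.Subgraph)
    (r : V) (hT : IsNormalTree G T r) (hfin : T.verts.Finite)
    (W : Set V) (hW : W.Finite) :
    ∃ T' : G.Subgraph, T ≤ T' ∧ IsNormalTree G T' r ∧ T'.verts.Finite ∧
      W ⊆ T'.verts :=
  NSTA.extend_many hG hW T hT hfin
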